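/- Let a ∈ (0,1) and let S_a = {x ∈ ℂⁿ : ‖x‖ = (1/2)^{1/a}} be the sphere of radius (1/2)^{1/a} in ℂⁿ with the Euclidean norm. Then the kernel S(x,y) = 1 − ‖x−y‖^a is positive definite on S_a. -/

import Mathlib

open Finset Complex MeasureTheory Set

lemma one_sub_exp_neg_le (u : ℝ) : 1 - Real.exp (-u) ≤ u := by
  have := Real.add_one_le_exp (-u); linarith

lemma one_sub_exp_neg_nonneg {u : ℝ} (hu : 0 ≤ u) : 0 ≤ 1 - Real.exp (-u) := by
  have : Real.exp (-u) ≤ 1 := Real.exp_le_one_iff.mpr (by linarith)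
  linarith

lemma one_sub_exp_neg_le_one {u : ℝ} (hu : 0 ≤ u) : 1 - Real.exp (-u) ≤ 1 := by
  have := Real.exp_pos (-u); linarith

lemma rpow_absorb {b s : ℝ} (hs : 0 < s) : s * s ^ (-b-1) = s ^ (-b) := by
  nth_rewrite 1 [← Real.rpow_one s]
  rw [← Real.rpow_add hs]
  norm_num

lemma phi_integrable {b : ℝ} (hb0 : 0 < b) (hb1 : b < 1) {t : ℝ} (ht : 0 ≤ t) :
    IntegrableOn (fun s : ℝ => (1 - Real.exp (-(t * s))) * s ^ (-b-1)) (Ioi 0) := by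
  have hmeas : ∀ u : Set ℝ, AEStronglyMeasurable (fun s : ℝ => (1 - Real.exp (-(t * s))) * s ^ (-b-1))
      (volume.restrict u) := fun u => Measurable.aestronglyMeasurable
    (((measurable_const.sub ((measurable_id.const_mul t).neg.exp)).mul
      (measurable_id.pow_const _)))
  have h1 : IntegrableOn (fun s : ℝ => (1 - Real.exp (-(t * s))) * s ^ (-b-1)) (Ioc 0 1) := by
    have hint : IntegrableOn (fun s : ℝ => t * s ^ (-b)) (Ioc 0 1) := by
      have h0 : IntegrableOn (fun s : ℝ => s ^ (-b)) (Ioo 0 1) :=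
        (intervalIntegral.integrableOn_Ioo_rpow_iff one_pos).mpr (by linarith)
      exact (h0.congr_set_ae Ioo_ae_eq_Ioc.symm).const_mul t
    refine Integrable.mono' hint (hmeas _) ?_
    refine (ae_restrict_iff' measurableSet_Ioc).mpr (Filter.Eventually.of_forall fun s hs => ?_)
    obtain ⟨hs0, hs1⟩ := hs
    have hrp : (0:ℝ) < s ^ (-b-1) := Real.rpow_pos_of_pos hs0 _
    have hts : 0 ≤ t * s := mul_nonneg ht hs0.le
    rw [Real.norm_eq_abs, _root_.abs_mul, _root_.abs_of_nonneg (one_sub_exp_neg_nonneg hts), _root_.abs_of_pos hrp]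
    calc (1 - Real.exp (-(t*s))) * s ^ (-b-1) ≤ (t*s) * s ^ (-b-1) :=
          mul_le_mul_of_nonneg_right (one_sub_exp_neg_le _) hrp.le
      _ = t * s ^ (-b) := by rw [mul_assoc, rpow_absorb hs0]
  have h2 : IntegrableOn (fun s : ℝ => (1 - Real.exp (-(t * s))) * s ^ (-b-1)) (Ioi 1) := by
    have hint : IntegrableOn (fun s : ℝ => s ^ (-b-1)) (Ioi 1) :=
      integrableOn_Ioi_rpow_of_lt (by linarith) one_pos
    refine Integrable.mono' hint (hmeas _) ?_
    refine (ae_restrict_iff' measurableSet_Ioi).mpr (Filter.Eventually.of_forall fun s hs => ?_)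
    have hs0 : (0:ℝ) < s := lt_trans one_pos hs
    have hrp : (0:ℝ) < s ^ (-b-1) := Real.rpow_pos_of_pos hs0 _
    have hts : 0 ≤ t * s := mul_nonneg ht hs0.le
    rw [Real.norm_eq_abs, _root_.abs_mul, _root_.abs_of_nonneg (one_sub_exp_neg_nonneg hts), _root_.abs_of_pos hrp]
    calc (1 - Real.exp (-(t*s))) * s ^ (-b-1) ≤ 1 * s ^ (-b-1) :=
          mul_le_mul_of_nonneg_right (one_sub_exp_neg_le_one hts) hrp.le
      _ = s ^ (-b-1) := one_mul _
  have huni : Ioc (0:ℝ) 1 ∪ Ioi (1:ℝ) = Ioi (0:ℝ) := Set.Ioc_union_Ioi_eq_Ioi zero_le_one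
  rw [← huni]
  exact h1.union h2

noncomputable def Cb (b : ℝ) : ℝ := ∫ s in Ioi (0:ℝ), (1 - Real.exp (-(1*s))) * s ^ (-b-1)

lemma phi_repr {b : ℝ} (hb0 : 0 < b) (hb1 : b < 1) {t : ℝ} (ht : 0 ≤ t) :
    (∫ s in Ioi (0:ℝ), (1 - Real.exp (-(t * s))) * s ^ (-b-1)) = t ^ b * Cb b := by
  rcases eq_or_lt_of_le ht with h0 | hpos
  · rw [← h0]
    simp only [zero_mul, neg_zero, Real.exp_zero, sub_self]
    rw [Real.zero_rpow (ne_of_gt hb0)]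
    simp
  · -- substitution s ↦ t * s
    have key : ∀ s ∈ Ioi (0:ℝ), (1 - Real.exp (-(t * s))) * s ^ (-b-1)
        = t ^ (b+1) * ((1 - Real.exp (-(1 * (t * s)))) * (t * s) ^ (-b-1)) := by
      intro s hs
      have hs0 : (0:ℝ) < s := hs
      rw [one_mul, Real.mul_rpow hpos.le hs0.le]
      rw [← mul_assoc, ← mul_assoc]
      congr 1
      rw [mul_comm (t ^ (b+1)), mul_assoc]
      congr 1
      rw [← Real.rpow_add hpos]
      norm_num
    rw [setIntegral_congr_fun measurableSet_Ioi key, integral_const_mul]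
    have hsub := integral_comp_mul_left_Ioi
      (fun u : ℝ => (1 - Real.exp (-(1 * u))) * u ^ (-b-1)) 0 hpos
    rw [mul_zero] at hsub
    rw [hsub, smul_eq_mul, ← Cb]
    rw [← mul_assoc]
    congr 1
    rw [← Real.rpow_neg_one t, ← Real.rpow_add hpos]
    congr 1
    ring

lemma Cb_pos {b : ℝ} (hb0 : 0 < b) (hb1 : b < 1) : 0 < Cb b := by
  have hint : IntegrableOn (fun s : ℝ => (1 - Real.exp (-(1 * s))) * s ^ (-b-1)) (Ioi 0) :=
    phi_integrable hb0 hb1 zero_le_one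
  have hnn : 0 ≤ᵐ[volume.restrict (Ioi (0:ℝ))]
      (fun s : ℝ => (1 - Real.exp (-(1 * s))) * s ^ (-b-1)) := by
    refine (ae_restrict_iff' measurableSet_Ioi).mpr (Filter.Eventually.of_forall fun s hs => ?_)
    have hs0 : (0:ℝ) < s := hs
    have h1 : Real.exp (-(1*s)) < 1 := by
      rw [Real.exp_lt_one_iff]; linarith
    exact mul_nonneg (by linarith) (Real.rpow_pos_of_pos hs0 _).le
  rw [Cb]
  rw [setIntegral_pos_iff_support_of_nonneg_ae hnn hint]
  have hsupp : Ioi (0:ℝ) ⊆ Function.support (fun s : ℝ => (1 - Real.exp (-(1 * s))) * s ^ (-b-1)) := by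
    intro s hs
    have hs0 : (0:ℝ) < s := hs
    have h1 : Real.exp (-(1*s)) < 1 := by rw [Real.exp_lt_one_iff]; linarith
    exact ne_of_gt (mul_pos (by linarith) (Real.rpow_pos_of_pos hs0 _))
  calc (0:ENNReal) < volume (Ioi (0:ℝ)) := by simp
    _ ≤ volume (Function.support (fun s : ℝ => (1 - Real.exp (-(1 * s))) * s ^ (-b-1)) ∩ Ioi 0) := by
        refine measure_mono fun s hs => ⟨hsupp hs, hs⟩

lemma gram_pow_nonneg {N : ℕ} (d : Fin N → ℝ) {D : Type*} [Fintype D]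
    (g : D → Fin N → ℝ) (m : ℕ) :
    0 ≤ ∑ j, ∑ i, d i * d j * (∑ k : D, g k i * g k j) ^ m := by
  have expand : ∀ i j : Fin N, (∑ k : D, g k i * g k j) ^ m
      = ∑ f ∈ Fintype.piFinset (fun _ : Fin m => (univ : Finset D)),
          (∏ l, g (f l) i) * (∏ l, g (f l) j) := by
    intro i j
    have h1 : (∑ k : D, g k i * g k j) ^ m
        = ∏ _l : Fin m, (∑ k : D, g k i * g k j) := by
      rw [Finset.prod_const, Finset.card_univ, Fintype.card_fin]
    rw [h1, Finset.prod_univ_sum]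
    exact Finset.sum_congr rfl fun f _ => Finset.prod_mul_distrib
  calc (0:ℝ) ≤ ∑ f ∈ Fintype.piFinset (fun _ : Fin m => (univ : Finset D)),
        (∑ i, d i * ∏ l, g (f l) i) ^ 2 := Finset.sum_nonneg fun _ _ => sq_nonneg _
    _ = ∑ j, ∑ i, d i * d j * (∑ k : D, g k i * g k j) ^ m := by
      simp only [expand, sq, Finset.sum_mul, Finset.mul_sum]
      rw [Finset.sum_comm]
      refine Finset.sum_congr rfl fun j _ => ?_
      rw [Finset.sum_comm]
      exact Finset.sum_congr rfl fun i _ => Finset.sum_congr rfl fun f _ => by ring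

lemma exp_quadratic_ge {N : ℕ} (d : Fin N → ℝ) {D : Type*} [Fintype D]
    (g : D → Fin N → ℝ) {s : ℝ} (hs : 0 ≤ s) :
    (∑ i, d i) ^ 2 ≤ ∑ j, ∑ i, d i * d j * Real.exp (s * ∑ k : D, g k i * g k j) := by
  set t : Fin N → Fin N → ℝ := fun i j => ∑ k : D, g k i * g k j with ht
  have hexp : ∀ i j : Fin N, Real.exp (s * t i j) = ∑' m : ℕ, (s * t i j) ^ m / m.factorial := by
    intro i j
    rw [Real.exp_eq_exp_ℝ, NormedSpace.exp_eq_tsum_div]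
  have hsummable : ∀ i j : Fin N, Summable (fun m : ℕ => d i * d j * ((s * t i j) ^ m / m.factorial)) :=
    fun i j => (Real.summable_pow_div_factorial (s * t i j)).mul_left _
  set F : ℕ → ℝ := fun m => ∑ j, ∑ i, d i * d j * ((s * t i j) ^ m / m.factorial) with hF
  have hFsummable : Summable F :=
    summable_sum (fun j _ => summable_sum (fun i _ => hsummable i j))
  have step : (∑ j, ∑ i, d i * d j * Real.exp (s * t i j)) = ∑' m : ℕ, F m := by
    calc (∑ j, ∑ i, d i * d j * Real.exp (s * t i j))
        = ∑ j, ∑' m : ℕ, ∑ i, d i * d j * ((s * t i j) ^ m / m.factorial) := by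
          refine Finset.sum_congr rfl fun j _ => ?_
          rw [Summable.tsum_finsetSum (fun i _ => hsummable i j)]
          refine Finset.sum_congr rfl fun i _ => ?_
          rw [hexp i j, ← tsum_mul_left]
      _ = ∑' m : ℕ, F m := (Summable.tsum_finsetSum (fun j _ => summable_sum (fun i _ => hsummable i j))).symm
  have hFnonneg : ∀ m : ℕ, 0 ≤ F m := by
    intro m
    have heq : F m = (s ^ m / m.factorial) * ∑ j, ∑ i, d i * d j * (t i j) ^ m := by
      simp only [hF, Finset.mul_sum]
      refine Finset.sum_congr rfl fun j _ => Finset.sum_congr rfl fun i _ => ?_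
      rw [mul_pow]; ring
    rw [heq]
    exact mul_nonneg (div_nonneg (pow_nonneg hs m) (Nat.cast_nonneg _)) (gram_pow_nonneg d g m)
  have hF0 : F 0 = (∑ i, d i) ^ 2 := by
    simp only [hF, pow_zero, Nat.factorial_zero, Nat.cast_one, div_one, mul_one]
    rw [sq, Finset.sum_mul_sum]
    rw [Finset.sum_comm]
  rw [step, ← hF0]
  exact Summable.le_tsum hFsummable 0 (fun m _ => hFnonneg m)

lemma G_nonneg {N : ℕ} (d : Fin N → ℝ) (R : ℝ) {D : Type*} [Fintype D]
    (g : D → Fin N → ℝ) (nn : Fin N → Fin N → ℝ)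
    (hn : ∀ i j, nn i j = 2*R - 2*(∑ k : D, g k i * g k j)) {s : ℝ} (hs : 0 ≤ s) :
    0 ≤ ∑ j, ∑ i, d i * d j * (1 - 2*Real.exp (-(R*s)) + Real.exp (-(nn i j * s))) := by
  set t : Fin N → Fin N → ℝ := fun i j => ∑ k : D, g k i * g k j with htdef
  set e : ℝ := Real.exp (-(R*s)) with he
  set T : ℝ := ∑ i, d i with hT
  set E : ℝ := ∑ j, ∑ i, d i * d j * Real.exp ((2*s) * t i j) with hE
  have hTT : ∑ j, ∑ i, d i * d j = T^2 := by
    rw [hT, sq, Finset.sum_mul_sum, Finset.sum_comm]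
  have hEge : T^2 ≤ E := exp_quadratic_ge d g (by linarith)
  have hrw : ∀ i j : Fin N, Real.exp (-(nn i j * s)) = e^2 * Real.exp ((2*s) * t i j) := by
    intro i j
    rw [he, ← Real.exp_nat_mul, ← Real.exp_add]
    congr 1
    rw [hn i j]
    push_cast
    ring
  have expand : ∑ j, ∑ i, d i * d j * (1 - 2*e + Real.exp (-(nn i j * s)))
      = T^2 - 2*e*T^2 + e^2 * E := by
    have inner : ∀ j : Fin N, ∑ i, d i * d j * (1 - 2*e + Real.exp (-(nn i j * s)))
        = (∑ i, d i * d j) - 2*e*(∑ i, d i * d j) + e^2 * (∑ i, d i * d j * Real.exp ((2*s) * t i j)) := by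
      intro j
      rw [Finset.mul_sum, Finset.mul_sum, ← Finset.sum_sub_distrib, ← Finset.sum_add_distrib]
      refine Finset.sum_congr rfl fun i _ => ?_
      rw [hrw i j]; ring
    rw [Finset.sum_congr rfl fun j _ => inner j]
    rw [Finset.sum_add_distrib, Finset.sum_sub_distrib, ← Finset.mul_sum, ← Finset.mul_sum, hTT, hE]
  rw [expand]
  calc (0:ℝ) ≤ T^2 * (1-e)^2 + e^2 * (E - T^2) :=
        add_nonneg (mul_nonneg (sq_nonneg _) (sq_nonneg _))
          (mul_nonneg (sq_nonneg _) (by linarith))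
    _ = T^2 - 2*e*T^2 + e^2 * E := by ring

lemma key_real (n : ℕ) {a : ℝ} (ha0 : 0 < a) (ha1 : a < 1) {N : ℕ}
    (x : Fin N → EuclideanSpace ℂ (Fin n))
    (hx : ∀ i, ‖x i‖ = (1/2:ℝ) ^ (1/a)) (d : Fin N → ℝ) :
    0 ≤ ∑ j, ∑ i, d i * d j * (1 - ‖x i - x j‖ ^ a) := by
  set b : ℝ := a/2 with hbdef
  have hb0 : 0 < b := by simp only [hbdef]; linarith
  have hb1 : b < 1 := by simp only [hbdef]; linarith
  have h2b : (2:ℝ) * b = a := by simp only [hbdef]; ring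
  set r : ℝ := (1/2:ℝ) ^ (1/a) with hrdef
  have hr0 : 0 < r := Real.rpow_pos_of_pos (by norm_num) _
  have hra : r ^ a = 1/2 := by
    rw [hrdef, ← Real.rpow_mul (by norm_num : (0:ℝ) ≤ 1/2), one_div a,
      inv_mul_cancel₀ (ne_of_gt ha0), Real.rpow_one]
  set R : ℝ := r^(2:ℕ) with hRdef
  have hR0 : 0 < R := pow_pos hr0 2
  have hRb : R ^ b = 1/2 := by
    rw [hRdef, ← Real.rpow_natCast r 2, ← Real.rpow_mul hr0.le]
    push_cast
    rw [h2b, hra]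
  set nn : Fin N → Fin N → ℝ := fun i j => ‖x i - x j‖^(2:ℕ) with hnndef
  have hnn0 : ∀ i j, 0 ≤ nn i j := fun i j => pow_nonneg (norm_nonneg _) 2
  have hnnb : ∀ i j, (nn i j) ^ b = ‖x i - x j‖ ^ a := by
    intro i j
    show ((‖x i - x j‖^(2:ℕ) : ℝ)) ^ b = _
    rw [← Real.rpow_natCast _ 2, ← Real.rpow_mul (norm_nonneg _)]
    push_cast
    rw [h2b]
  have hK : ∀ i j, 1 - ‖x i - x j‖ ^ a = 2 * R ^ b - nn i j ^ b := by
    intro i j; rw [hRb, hnnb]; ring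
  -- Gram decomposition of nn
  set g : (Fin n × Bool) → Fin N → ℝ :=
    fun k i => if k.2 then (x i k.1).im else (x i k.1).re with hgdef
  have hnorm_sq : ∀ y : EuclideanSpace ℂ (Fin n),
      ‖y‖^(2:ℕ) = ∑ k, ((y k).re^2 + (y k).im^2) := by
    intro y
    rw [EuclideanSpace.norm_eq, Real.sq_sqrt (Finset.sum_nonneg fun k _ => sq_nonneg _)]
    refine Finset.sum_congr rfl fun k _ => ?_
    rw [Complex.sq_norm, Complex.normSq_apply]
    ring
  have hg : ∀ i j, (∑ k : Fin n × Bool, g k i * g k j)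
      = ∑ k : Fin n, ((x i k).re*(x j k).re + (x i k).im*(x j k).im) := by
    intro i j
    rw [Fintype.sum_prod_type]
    refine Finset.sum_congr rfl fun k _ => ?_
    rw [Fintype.sum_bool]
    simp only [hgdef]
    norm_num
    ring
  have hsubapp : ∀ i j (k : Fin n), (x i - x j) k = x i k - x j k := fun i j k => rfl
  have hinner : ∀ i j, nn i j = 2*R - 2*(∑ k : Fin n × Bool, g k i * g k j) := by
    intro i j
    have hRi : ∀ i', (∑ k : Fin n, ((x i' k).re^2 + (x i' k).im^2)) = R := by
      intro i'
      rw [← hnorm_sq, hx i', hRdef, hrdef]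
    calc nn i j = ∑ k : Fin n, ((((x i k).re^2 + (x i k).im^2)
            + ((x j k).re^2 + (x j k).im^2))
            - 2*((x i k).re*(x j k).re + (x i k).im*(x j k).im)) := by
          simp only [hnndef]
          rw [hnorm_sq]
          refine Finset.sum_congr rfl fun k _ => ?_
          rw [hsubapp, Complex.sub_re, Complex.sub_im]
          ring
      _ = ((∑ k : Fin n, ((x i k).re^2 + (x i k).im^2))
            + (∑ k : Fin n, ((x j k).re^2 + (x j k).im^2)))
            - 2*(∑ k : Fin n, ((x i k).re*(x j k).re + (x i k).im*(x j k).im)) := by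
          rw [Finset.sum_sub_distrib, Finset.sum_add_distrib, Finset.mul_sum]
      _ = 2*R - 2*(∑ k : Fin n × Bool, g k i * g k j) := by
          rw [hRi i, hRi j, hg]; ring
  -- integral representation
  have hCpos : 0 < Cb b := Cb_pos hb0 hb1
  rw [← mul_nonneg_iff_of_pos_right hCpos]
  have hint : ∀ i j, IntegrableOn (fun s : ℝ =>
      d i * d j * ((1 - 2*Real.exp (-(R*s)) + Real.exp (-(nn i j * s))) * s ^ (-b-1))) (Ioi 0) := by
    intro i j
    have h1 := ((phi_integrable hb0 hb1 hR0.le).const_mul 2).sub (phi_integrable hb0 hb1 (hnn0 i j))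
    have h2 := h1.const_mul (d i * d j)
    refine IntegrableOn.congr_fun h2 (fun s _ => ?_) measurableSet_Ioi
    simp only [Pi.sub_apply]
    ring
  have per_term : ∀ i j : Fin N, (d i * d j * (1 - ‖x i - x j‖^a)) * Cb b
      = ∫ s in Ioi (0:ℝ), d i * d j * ((1 - 2*Real.exp (-(R*s)) + Real.exp (-(nn i j * s))) * s ^ (-b-1)) := by
    intro i j
    have heq : (fun s : ℝ => d i * d j * ((1 - 2*Real.exp (-(R*s)) + Real.exp (-(nn i j * s))) * s ^ (-b-1)))
        = fun s : ℝ => d i * d j * (2*((1 - Real.exp (-(R*s))) * s ^ (-b-1))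
            - (1 - Real.exp (-(nn i j * s))) * s ^ (-b-1)) := funext fun s => by ring
    rw [heq, integral_const_mul, integral_sub ((phi_integrable hb0 hb1 hR0.le).const_mul 2)
      (phi_integrable hb0 hb1 (hnn0 i j)), integral_const_mul,
      phi_repr hb0 hb1 hR0.le, phi_repr hb0 hb1 (hnn0 i j), hK i j]
    ring
  calc (0:ℝ) ≤ ∫ s in Ioi (0:ℝ), ∑ j, ∑ i,
        d i * d j * ((1 - 2*Real.exp (-(R*s)) + Real.exp (-(nn i j * s))) * s ^ (-b-1)) := by
        refine setIntegral_nonneg measurableSet_Ioi fun s hs => ?_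
        have hs0 : (0:ℝ) < s := hs
        have factored : ∑ j, ∑ i, d i * d j * ((1 - 2*Real.exp (-(R*s)) + Real.exp (-(nn i j * s))) * s ^ (-b-1))
            = (∑ j, ∑ i, d i * d j * (1 - 2*Real.exp (-(R*s)) + Real.exp (-(nn i j * s)))) * s ^ (-b-1) := by
          rw [Finset.sum_mul]
          refine Finset.sum_congr rfl fun j _ => ?_
          rw [Finset.sum_mul]
          exact Finset.sum_congr rfl fun i _ => by ring
        rw [factored]
        exact mul_nonneg (G_nonneg d R g nn hinner hs0.le) (Real.rpow_pos_of_pos hs0 _).le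
    _ = ∑ j, ∑ i, (d i * d j * (1 - ‖x i - x j‖^a)) * Cb b := by
        rw [integral_finset_sum _ (fun j _ => integrable_finset_sum _ (fun i _ => hint i j))]
        refine Finset.sum_congr rfl fun j _ => ?_
        rw [integral_finset_sum _ (fun i _ => hint i j)]
        exact Finset.sum_congr rfl fun i _ => (per_term i j).symm
    _ = (∑ j, ∑ i, d i * d j * (1 - ‖x i - x j‖^a)) * Cb b := by
        rw [Finset.sum_mul]
        exact Finset.sum_congr rfl fun j _ => by rw [Finset.sum_mul]

theorem one_sub_dist_rpow_positive_definite_on_sphere (n : ℕ) (a : ℝ)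
    (ha : a ∈ Set.Ioo (0 : ℝ) 1) :
    ∀ (N : ℕ) (x : Fin N → EuclideanSpace ℂ (Fin n)),
      (∀ i, ‖x i‖ = (1 / 2 : ℝ) ^ (1 / a)) →
      ∀ c : Fin N → ℂ,
        (∑ j, ∑ i, (starRingEnd ℂ) (c i) *
          ((1 - ‖x i - x j‖ ^ a : ℝ) : ℂ) * c j).im = 0 ∧
        0 ≤ (∑ j, ∑ i, (starRingEnd ℂ) (c i) *
          ((1 - ‖x i - x j‖ ^ a : ℝ) : ℂ) * c j).re := by
  obtain ⟨ha0, ha1⟩ := ha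
  intro N x hx c
  set K : Fin N → Fin N → ℝ := fun i j => 1 - ‖x i - x j‖ ^ a with hKdef
  have hKsymm : ∀ i j, K i j = K j i := by
    intro i j; simp only [hKdef, norm_sub_rev]
  have term_re : ∀ i j, ((starRingEnd ℂ) (c i) * ((K i j : ℝ) : ℂ) * c j).re
      = (c i).re * (c j).re * K i j + (c i).im * (c j).im * K i j := by
    intro i j
    simp only [Complex.mul_re, Complex.mul_im, Complex.conj_re, Complex.conj_im,
      Complex.ofReal_re, Complex.ofReal_im]
    ring
  have term_im : ∀ i j, ((starRingEnd ℂ) (c i) * ((K i j : ℝ) : ℂ) * c j).im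
      = ((c i).re * (c j).im - (c i).im * (c j).re) * K i j := by
    intro i j
    simp only [Complex.mul_re, Complex.mul_im, Complex.conj_re, Complex.conj_im,
      Complex.ofReal_re, Complex.ofReal_im]
    ring
  constructor
  · rw [Complex.im_sum]
    simp only [Complex.im_sum]
    rw [Finset.sum_congr rfl fun j _ => Finset.sum_congr rfl fun i _ => term_im i j]
    set A : Fin N → Fin N → ℝ := fun i j => ((c i).re * (c j).im - (c i).im * (c j).re) * K i j
      with hA
    have hneg : ∀ i j, A i j = - A j i := by
      intro i j; simp only [hA]; rw [hKsymm i j]; ring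
    have : (∑ j, ∑ i, A i j) = - (∑ j, ∑ i, A i j) := by
      nth_rewrite 1 [Finset.sum_comm]
      calc ∑ i, ∑ j, A i j = ∑ i, ∑ j, - A j i :=
            Finset.sum_congr rfl fun i _ => Finset.sum_congr rfl fun j _ => hneg i j
        _ = - (∑ j, ∑ i, A i j) := by
            rw [← Finset.sum_neg_distrib]
            exact Finset.sum_congr rfl fun i _ => Finset.sum_neg_distrib _
    linarith
  · rw [Complex.re_sum]
    simp only [Complex.re_sum]
    rw [Finset.sum_congr rfl fun j _ => Finset.sum_congr rfl fun i _ => term_re i j]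
    have h1 := key_real n ha0 ha1 x hx (fun i => (c i).re)
    have h2 := key_real n ha0 ha1 x hx (fun i => (c i).im)
    rw [Finset.sum_congr rfl fun j (_ : j ∈ Finset.univ) => Finset.sum_add_distrib,
      Finset.sum_add_distrib]
    exact add_nonneg h1 h2
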